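/- Let γ : ℝ → ℝⁿ be a C² unit-speed curve contained in the closed unit ball (‖γ(t)‖ ≤ 1 for all t) with ‖γ''(t)‖ ≤ 1 for all t. Then ‖γ(t)‖ = 1 for all t and γ''(t) = −γ(t) for all t; that is, γ parametrizes a great circle of the unit sphere. -/

import Mathlib

open Real

/-- **Rigidity:** a C² unit-speed curve `γ : ℝ → ℝⁿ` contained in the closed unit ball
with curvature `‖γ''‖ ≤ 1` everywhere must lie on the unit sphere and satisfy
`γ'' = -γ`; that is, it parametrizes a great circle of the unit sphere. -/
theorem curve_in_unit_ball_with_curvature_one_is_great_circle {n : ℕ}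
    (γ : ℝ → EuclideanSpace ℝ (Fin n))
    (hγ : ContDiff ℝ 2 γ)
    (hspeed : ∀ t : ℝ, ‖deriv γ t‖ = 1)
    (hball : ∀ t : ℝ, ‖γ t‖ ≤ 1)
    (hcurv : ∀ t : ℝ, ‖deriv (deriv γ) t‖ ≤ 1) :
    (∀ t : ℝ, ‖γ t‖ = 1) ∧ (∀ t : ℝ, deriv (deriv γ) t = -γ t) := by
  have hdiff : Differentiable ℝ γ := hγ.differentiable (by norm_num)
  have h2 : ContDiff ℝ 1 (deriv γ) := by
    have : ContDiff ℝ (1 + 1 : ℕ) γ := by exact_mod_cast hγ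
    exact (contDiff_succ_iff_deriv.mp this).2.2
  have hdiff' : Differentiable ℝ (deriv γ) := h2.differentiable (by norm_num)
  set γ' := deriv γ with hγ'
  set γ'' := deriv γ' with hγ''
  have hd1 : ∀ t, HasDerivAt γ (γ' t) t := fun t => (hdiff t).hasDerivAt
  have hd2 : ∀ t, HasDerivAt γ' (γ'' t) t := fun t => (hdiff' t).hasDerivAt
  -- the inner products
  set g : ℝ → ℝ := fun t => inner ℝ (γ t) (γ t) with hgdef
  set h : ℝ → ℝ := fun t => 2 * inner ℝ (γ' t) (γ t) with hhdef
  have hg' : ∀ t, HasDerivAt g (h t) t := by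
    intro t
    have H := (hd1 t).inner ℝ (hd1 t)
    have e : (inner ℝ (γ t) (γ' t) : ℝ) + inner ℝ (γ' t) (γ t) = h t := by
      simp only [hhdef, real_inner_comm (γ' t) (γ t)]; ring
    rw [e] at H
    exact H
  have hh' : ∀ t, HasDerivAt h (2 * ((inner ℝ (γ'' t) (γ t) : ℝ) + 1)) t := by
    intro t
    have H := ((hd2 t).inner ℝ (hd1 t)).const_mul (2 : ℝ)
    have h1 : (inner ℝ (γ' t) (γ' t) : ℝ) = 1 := by
      rw [real_inner_self_eq_norm_sq, hspeed t]; norm_num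
    have e : (2:ℝ) * ((inner ℝ (γ' t) (γ' t) : ℝ) + inner ℝ (γ'' t) (γ t))
        = 2 * ((inner ℝ (γ'' t) (γ t) : ℝ) + 1) := by rw [h1]; ring
    rw [e] at H
    exact H
  have hinner_ge : ∀ t, (-1 : ℝ) ≤ inner ℝ (γ'' t) (γ t) := by
    intro t
    have := abs_real_inner_le_norm (γ'' t) (γ t)
    have hb := mul_le_one₀ (hcurv t) (norm_nonneg _) (hball t)
    have := (abs_le.mp (this.trans hb)).1
    linarith
  -- h is monotone
  have hmono : Monotone h := by
    apply monotone_of_deriv_nonneg (fun t => (hh' t).differentiableAt)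
    intro t
    rw [(hh' t).deriv]
    have := hinner_ge t
    linarith
  -- g bounded: 0 ≤ g ≤ 1
  have hg01 : ∀ t, 0 ≤ g t ∧ g t ≤ 1 := by
    intro t
    constructor
    · exact real_inner_self_nonneg
    · have : g t = ‖γ t‖ ^ 2 := real_inner_self_eq_norm_sq _
      rw [this]
      calc ‖γ t‖ ^ 2 ≤ 1 ^ 2 := by
              exact pow_le_pow_left₀ (norm_nonneg _) (hball t) 2
        _ = 1 := one_pow 2
  -- h is identically 0
  have hzero : ∀ t, h t = 0 := by
    intro t
    by_contra hne
    rcases lt_or_gt_of_ne hne with hneg | hpos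
    · -- h t < 0 : go left
      set a := t - 3 / (-h t) with ha
      have hpos' : (0:ℝ) < 3 / (-h t) := div_pos (by norm_num) (neg_pos.mpr hneg)
      have hat : a < t := by simp only [ha]; linarith
      obtain ⟨c, hc, hceq⟩ := exists_hasDerivAt_eq_slope g h hat
        (fun x _ => (hg' x).continuousAt.continuousWithinAt)
        (fun x _ => hg' x)
      have hch : h c ≤ h t := hmono hc.2.le
      have hslope : (g t - g a) / (t - a) ≤ h t := hceq ▸ hch
      have hta : t - a = 3 / (-h t) := by rw [ha]; ring
      rw [div_le_iff₀ (by rw [hta]; exact hpos')] at hslope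
      have : h t * (t - a) = -3 := by
        rw [hta, div_neg, mul_neg]; field_simp
      rw [this] at hslope
      have := (hg01 a).2; have := (hg01 t).1
      linarith
    · -- h t > 0 : go right
      set b := t + 3 / h t with hb
      have hpos' : (0:ℝ) < 3 / h t := div_pos (by norm_num) hpos
      have htb : t < b := by simp only [hb]; linarith
      obtain ⟨c, hc, hceq⟩ := exists_hasDerivAt_eq_slope g h htb
        (fun x _ => (hg' x).continuousAt.continuousWithinAt)
        (fun x _ => hg' x)
      have hch : h t ≤ h c := hmono hc.1.le
      have hslope : h t ≤ (g b - g t) / (b - t) := hceq ▸ hch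
      have hbt : b - t = 3 / h t := by rw [hb]; ring
      rw [le_div_iff₀ (by rw [hbt]; exact hpos')] at hslope
      have : h t * (b - t) = 3 := by rw [hbt]; field_simp
      rw [this] at hslope
      have := (hg01 b).2; have := (hg01 t).1
      linarith
  -- hence deriv h = 0, so inner ℝ (γ'' t) (γ t) = -1
  have hkey : ∀ t, (inner ℝ (γ'' t) (γ t) : ℝ) = -1 := by
    intro t
    have h0 : HasDerivAt h 0 t := by
      have : h = fun _ => (0:ℝ) := funext hzero
      rw [this]; exact hasDerivAt_const t 0
    have := (hh' t).unique h0
    linarith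
  have hnorm1 : ∀ t, ‖γ t‖ = 1 := by
    intro t
    have h1 : (1:ℝ) ≤ ‖γ'' t‖ * ‖γ t‖ := by
      have := abs_real_inner_le_norm (γ'' t) (γ t)
      rw [hkey t] at this; simpa using this
    have h2' : ‖γ'' t‖ * ‖γ t‖ ≤ 1 * ‖γ t‖ :=
      mul_le_mul_of_nonneg_right (hcurv t) (norm_nonneg _)
    have : (1:ℝ) ≤ ‖γ t‖ := by linarith [h1, h2']
    linarith [hball t]
  refine ⟨hnorm1, fun t => ?_⟩
  have hnorm2 : ‖γ'' t‖ = 1 := by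
    have h1 : (1:ℝ) ≤ ‖γ'' t‖ * ‖γ t‖ := by
      have := abs_real_inner_le_norm (γ'' t) (γ t)
      rw [hkey t] at this; simpa using this
    rw [hnorm1 t, mul_one] at h1
    linarith [hcurv t]
  have hsq : ‖γ'' t + γ t‖ ^ 2 = 0 := by
    rw [norm_add_sq_real, hkey t, hnorm1 t, hnorm2]; ring
  have : γ'' t + γ t = 0 := by
    have := pow_eq_zero_iff (n := 2) (by norm_num) |>.mp hsq
    exact norm_eq_zero.mp this
  exact eq_neg_of_add_eq_zero_left this
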